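/- Define ρ(x,t) := √((4t − x²)₊)/(2πt) for t > 0, and define u(x,t) := x/(2t) for |x| ≤ 2√t, u(x,t) := (x − √(x² − 4t))/(2t) for x > 2√t, and u(x,t) := (x + √(x² − 4t))/(2t) for x < −2√t. Then at every point (x,t) with t > 0 and |x| ≠ 2√t, the functions ρ and ρ·u are differentiable and satisfy the continuity equation ∂_t ρ(x,t) + ∂_x(ρ(x,t)·u(x,t)) = 0. -/

import Mathlib

open MeasureTheory Filter
open scoped Topology

/-- The self-similar semicircle profile `ρ(x,t) = √((4t - x²)₊)/(2πt)` together with the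
explicit Hilbert transform `u = πHρ` satisfies the continuity equation
`∂ₜρ + ∂ₓ(ρu) = 0` pointwise away from the boundary of the support `|x| = 2√t`. -/
theorem stmt3 (ρ u : ℝ → ℝ → ℝ)
    (hρ : ∀ x t : ℝ, ρ x t = Real.sqrt (max (4 * t - x ^ 2) 0) / (2 * Real.pi * t))
    (hu1 : ∀ x t : ℝ, 0 < t → |x| ≤ 2 * Real.sqrt t → u x t = x / (2 * t))
    (hu2 : ∀ x t : ℝ, 0 < t → 2 * Real.sqrt t < x →
      u x t = (x - Real.sqrt (x ^ 2 - 4 * t)) / (2 * t))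
    (hu3 : ∀ x t : ℝ, 0 < t → x < -(2 * Real.sqrt t) →
      u x t = (x + Real.sqrt (x ^ 2 - 4 * t)) / (2 * t))
    (x t : ℝ) (ht : 0 < t) (hx : |x| ≠ 2 * Real.sqrt t) :
    ∃ a b : ℝ,
      HasDerivAt (fun s => ρ x s) a t ∧
      HasDerivAt (fun y => ρ y t * u y t) b x ∧
      a + b = 0 := by
  have hπ : (Real.pi : ℝ) ≠ 0 := Real.pi_ne_zero
  have ht' : t ≠ 0 := ht.ne'
  have hsq : (2 * Real.sqrt t) ^ 2 = 4 * t := by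
    rw [mul_pow, Real.sq_sqrt ht.le]; ring
  rcases lt_or_gt_of_ne hx with hlt | hgt
  · -- inside the support
    have hD : 0 < 4 * t - x ^ 2 := by
      have h1 : x ^ 2 < (2 * Real.sqrt t) ^ 2 := by
        rw [← sq_abs]; exact pow_lt_pow_left₀ hlt (abs_nonneg x) (by norm_num)
      rw [hsq] at h1; linarith
    have hsD : 0 < Real.sqrt (4 * t - x ^ 2) := Real.sqrt_pos.mpr hD
    set S := Real.sqrt (4 * t - x ^ 2) with hS
    have hS2 : S * S = 4 * t - x ^ 2 := Real.mul_self_sqrt hD.le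
    -- derivative in time
    have hinner : HasDerivAt (fun s : ℝ => 4 * s - x ^ 2) 4 t := by
      simpa using ((hasDerivAt_id t).const_mul (4:ℝ)).sub_const (x ^ 2)
    have h1 : HasDerivAt (fun s => Real.sqrt (4 * s - x ^ 2)) (2 / S) t := by
      have := (Real.hasDerivAt_sqrt (ne_of_gt hD)).comp t hinner
      convert this using 1
      · rfl
      · rfl
      · rfl
      rw [← hS]; field_simp; ring
    have hden : HasDerivAt (fun s : ℝ => 2 * Real.pi * s) (2 * Real.pi) t := by
      simpa using (hasDerivAt_id t).const_mul (2 * Real.pi)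
    have hden0 : 2 * Real.pi * t ≠ 0 := by positivity
    have ha' : HasDerivAt (fun s => Real.sqrt (4 * s - x ^ 2) / (2 * Real.pi * s))
        ((2 / S * (2 * Real.pi * t) - S * (2 * Real.pi)) / (2 * Real.pi * t) ^ 2) t :=
      h1.div hden hden0
    have hpos : ∀ᶠ s in 𝓝 t, x ^ 2 / 4 < s := eventually_gt_nhds (by linarith)
    have ha : HasDerivAt (fun s => ρ x s)
        ((2 / S * (2 * Real.pi * t) - S * (2 * Real.pi)) / (2 * Real.pi * t) ^ 2) t := by
      apply ha'.congr_of_eventuallyEq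
      filter_upwards [hpos] with s hs
      rw [hρ, max_eq_left (by linarith)]
    -- derivative in space
    have hinner2 : HasDerivAt (fun y : ℝ => 4 * t - y ^ 2) (-(2 * x)) x := by
      simpa [Pi.sub_def] using (hasDerivAt_const x (4 * t)).sub ((hasDerivAt_pow 2 x))
    have h2 : HasDerivAt (fun y => Real.sqrt (4 * t - y ^ 2)) (-x / S) x := by
      have := (Real.hasDerivAt_sqrt (ne_of_gt hD)).comp x hinner2
      convert this using 1
      · rfl
      · rfl
      · rfl
      rw [← hS]; field_simp
    have h3 : HasDerivAt (fun y => Real.sqrt (4 * t - y ^ 2) / (2 * Real.pi * t))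
        ((-x / S) / (2 * Real.pi * t)) x := h2.div_const _
    have h4 : HasDerivAt (fun y : ℝ => y / (2 * t)) (1 / (2 * t)) x := by
      simpa using (hasDerivAt_id x).div_const (2 * t)
    have hb' : HasDerivAt
        (fun y => Real.sqrt (4 * t - y ^ 2) / (2 * Real.pi * t) * (y / (2 * t)))
        ((-x / S) / (2 * Real.pi * t) * (x / (2 * t)) + S / (2 * Real.pi * t) * (1 / (2 * t)))
        x := h3.mul h4
    have hopen : ∀ᶠ y in 𝓝 x, |y| < 2 * Real.sqrt t :=
      (isOpen_lt continuous_abs continuous_const).eventually_mem hlt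
    have hb : HasDerivAt (fun y => ρ y t * u y t)
        ((-x / S) / (2 * Real.pi * t) * (x / (2 * t)) + S / (2 * Real.pi * t) * (1 / (2 * t)))
        x := by
      apply hb'.congr_of_eventuallyEq
      filter_upwards [hopen] with y hy
      have hy2 : y ^ 2 < 4 * t := by
        have := pow_lt_pow_left₀ hy (abs_nonneg y) (two_ne_zero)
        rw [sq_abs, hsq] at this; linarith
      rw [hρ, hu1 y t ht hy.le, max_eq_left (by linarith)]
    refine ⟨_, _, ha, hb, ?_⟩
    have hSne : S ≠ 0 := hsD.ne'
    field_simp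
    linear_combination (-1:ℝ) * hS2
  · -- outside the support
    have hD : x ^ 2 > 4 * t := by
      have h1 : (2 * Real.sqrt t) ^ 2 < x ^ 2 := by
        rw [← sq_abs x]
        exact pow_lt_pow_left₀ hgt (by positivity) (by norm_num)
      rw [hsq] at h1; linarith
    have hneg : ∀ᶠ s in 𝓝 t, s < x ^ 2 / 4 := eventually_lt_nhds (by linarith)
    have ha : HasDerivAt (fun s => ρ x s) 0 t := by
      apply (hasDerivAt_const t (0:ℝ)).congr_of_eventuallyEq
      filter_upwards [hneg] with s hs
      rw [hρ, max_eq_right (by linarith), Real.sqrt_zero, zero_div]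
    have hopen : ∀ᶠ y in 𝓝 x, 2 * Real.sqrt t < |y| :=
      (isOpen_lt continuous_const continuous_abs).eventually_mem hgt
    have hb : HasDerivAt (fun y => ρ y t * u y t) 0 x := by
      apply (hasDerivAt_const x (0:ℝ)).congr_of_eventuallyEq
      filter_upwards [hopen] with y hy
      have hy2 : 4 * t < y ^ 2 := by
        have := pow_lt_pow_left₀ hy (by positivity) (two_ne_zero)
        rw [sq_abs, hsq] at this; linarith
      rw [hρ, max_eq_right (by linarith), Real.sqrt_zero, zero_div, zero_mul]
    exact ⟨0, 0, ha, hb, by ring⟩
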